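/- Invertibility of the S-matrix of Z_q: Let p be a positive integer and q ∈ ℂ a primitive p-th root of unity. The matrix 𝖲 ∈ Matrix (ZMod p) (ZMod p) ℂ with entries 𝖲(t, s) = q^{2 · t.val · s.val} is invertible if and only if p is odd. -/
import Mathlib

noncomputable section

namespace Stmt14

/-- the S-matrix `𝖲(t,s) = q^{2ts}` of `Z_q` is invertible if and only if `p`
is odd. -/
theorem S_matrix_invertible (p : ℕ) [NeZero p] (q : ℂ) (hq : IsPrimitiveRoot q p) :
    IsUnit (Matrix.of fun t s : ZMod p => q ^ (2 * t.val * s.val)) ↔ Odd p := by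
  have hp : 0 < p := Nat.pos_of_ne_zero (NeZero.ne p)
  rw [Matrix.isUnit_iff_isUnit_det, isUnit_iff_ne_zero]
  constructor
  · intro h
    by_contra hodd
    apply h
    have hev : 2 ∣ p := (Nat.not_odd_iff_even.mp hodd).two_dvd
    have hlt : p / 2 < p := Nat.div_lt_self hp one_lt_two
    have hne : ((p / 2 : ℕ) : ZMod p) ≠ 0 := by
      intro h0
      have := (ZMod.natCast_eq_zero_iff _ _).mp h0
      have hpos : 0 < p / 2 := Nat.div_pos (Nat.le_of_dvd hp hev) two_pos
      exact absurd (Nat.le_of_dvd hpos this) (not_le.mpr hlt)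
    apply Matrix.det_zero_of_row_eq hne.symm
    funext s
    have hval : ((p / 2 : ℕ) : ZMod p).val = p / 2 := ZMod.val_cast_of_lt hlt
    simp only [Matrix.of_apply, ZMod.val_zero, hval]
    rw [mul_zero, zero_mul, pow_zero]
    have : 2 * (p / 2) * s.val = p * s.val := by
      rw [Nat.two_mul_div_two_of_even (even_iff_two_dvd.mpr hev)]
    rw [this, pow_mul, hq.pow_eq_one, one_pow]
  · intro hodd h
    have hq2 : IsPrimitiveRoot (q ^ 2) p :=
      hq.pow_of_coprime 2 (Nat.coprime_two_left.mpr hodd)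
    set e : ZMod p ≃ Fin p :=
      { toFun := fun t => ⟨t.val, ZMod.val_lt t⟩
        invFun := fun i => (i : ℕ)
        left_inv := fun t => ZMod.natCast_rightInverse t
        right_inv := fun i => by
          ext; exact ZMod.val_cast_of_lt i.isLt } with he
    have key : (Matrix.of fun t s : ZMod p => q ^ (2 * t.val * s.val)) =
        (Matrix.vandermonde fun i : Fin p => (q ^ 2) ^ (i : ℕ)).submatrix e e := by
      funext t s
      show q ^ (2 * t.val * s.val) = ((q ^ 2) ^ ((e t : Fin p) : ℕ)) ^ ((e s : Fin p) : ℕ)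
      have het : ((e t : Fin p) : ℕ) = t.val := rfl
      have hes : ((e s : Fin p) : ℕ) = s.val := rfl
      rw [het, hes, ← pow_mul, ← pow_mul]
      ring_nf
    rw [key, Matrix.det_submatrix_equiv_self] at h
    have : Function.Injective fun i : Fin p => (q ^ 2) ^ (i : ℕ) := by
      intro i j hij
      exact Fin.ext (hq2.pow_inj i.isLt j.isLt hij)
    exact Matrix.det_vandermonde_ne_zero_iff.mpr this h

end Stmt14
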